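/- Let X be a two-sided quaternionic Banach space, T ∈ B(X) and s ∈ ρ_S(T). Then the left spherical Yosida approximation satisfies Y_L(s,T) = T S_L^{-1}(s,T) s, i.e. S_L^{-1}(s,T)s² − sI = T ∘ (S_L^{-1}(s,T) s), where for A ∈ B(X) and q ∈ ℍ the operators Aq and qA are defined by (Aq)(v) = A(qv) and (qA)(v) = q(A(v)). -/

import Mathlib

open MulOpposite Filter

noncomputable section

local notation "ℍ" => Quaternion ℝ

variable {X : Type*} [NormedAddCommGroup X] [NormedSpace ℝ X] [CompleteSpace X]
  [Module ℍ X] [Module ℍᵐᵒᵖ X]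
  [IsScalarTower ℝ ℍ X] [IsScalarTower ℝ ℍᵐᵒᵖ X]
  [SMulCommClass ℝ ℍ X] [SMulCommClass ℝ ℍᵐᵒᵖ X]
  [SMulCommClass ℍ ℍᵐᵒᵖ X]
  [IsBoundedSMul ℍ X] [IsBoundedSMul ℍᵐᵒᵖ X]

/-- Left multiplication by a quaternion, as a bounded real-linear operator on `X`. -/
def lmulL (s : ℍ) : X →L[ℝ] X :=
  LinearMap.mkContinuous
    { toFun := fun v => s • v
      map_add' := fun u v => smul_add s u v
      map_smul' := fun r v => (smul_comm r s v).symm }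
    ‖s‖ (fun v => norm_smul_le s v)

/-- `T` is right `ℍ`-linear: `T (v q) = (T v) q`. -/
def RightLinear (T : X →L[ℝ] X) : Prop :=
  ∀ (q : ℍ) (v : X), T (op q • v) = op q • T v

/-- The operator `Q_s(T) = T² − 2 Re(s) T + |s|² I`. -/
def Qs (s : ℍ) (T : X →L[ℝ] X) : X →L[ℝ] X :=
  T * T - (2 * s.re) • T + (‖s‖ ^ 2 : ℝ) • (1 : X →L[ℝ] X)

/-- Invertibility in the algebra `B(X)` of bounded right `ℍ`-linear operators. -/
def InvertibleInB (A : X →L[ℝ] X) : Prop :=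
  ∃ B : X →L[ℝ] X, RightLinear B ∧ A * B = 1 ∧ B * A = 1

/-- The S-resolvent set of `T`. -/
def sResolventSet (T : X →L[ℝ] X) : Set ℍ :=
  {s : ℍ | InvertibleInB (Qs s T)}

/-- The S-spectrum of `T`. -/
def sSpectrum (T : X →L[ℝ] X) : Set ℍ :=
  {s : ℍ | ¬ InvertibleInB (Qs s T)}

/-- The left S-resolvent operator `S_L^{-1}(s,T) = Q_s(T)⁻¹ (conj(s) I − T)`. -/
def sResL (s : ℍ) (T : X →L[ℝ] X) : X →L[ℝ] X :=
  Ring.inverse (Qs s T) * (lmulL (star s) - T)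

/-- `T` is power-bounded: `sup_{n ≥ 1} ‖Tⁿ‖ < ∞`. -/
def PowerBounded (T : X →L[ℝ] X) : Prop :=
  ∃ C : ℝ, ∀ n : ℕ, 1 ≤ n → ‖T ^ n‖ ≤ C

/-- `p(T) = sup_{n ≥ 1} ‖Tⁿ‖`. -/
def pBound (T : X →L[ℝ] X) : ℝ :=
  ⨆ n : ℕ, ‖T ^ (n + 1)‖

section Aux

lemma lmulL_apply (q : ℍ) (v : X) : lmulL q v = q • v := rfl

lemma lmulL_mul (a b : ℍ) : (lmulL a * lmulL b : X →L[ℝ] X) = lmulL (a * b) := by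
  ext v
  simp [ContinuousLinearMap.mul_apply, lmulL_apply, mul_smul]

lemma lmulL_real (r : ℝ) : (lmulL ((r : ℍ)) : X →L[ℝ] X) = r • 1 := by
  ext v
  show ((r : ℍ)) • v = r • v
  exact algebraMap_smul ℍ r v

lemma lmulL_add (a b : ℍ) : (lmulL (a + b) : X →L[ℝ] X) = lmulL a + lmulL b := by
  ext v
  show (a + b) • v = a • v + b • v
  rw [add_smul]

end Aux

set_option maxHeartbeats 800000 in
set_option synthInstance.maxHeartbeats 400000 in
/-- For `s ∈ ρ_S(T)` the left spherical Yosida approximation satisfies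
`Y_L(s,T) = S_L^{-1}(s,T) s² − s I = T (S_L^{-1}(s,T) s)`. -/
theorem yosida_eq (T : X →L[ℝ] X) (hT : RightLinear T) (s : ℍ)
    (hs : s ∈ sResolventSet T) :
    sResL s T * lmulL (s ^ 2) - lmulL s = T * (sResL s T * lmulL s) := by
  obtain ⟨B, hB, h1, h2⟩ := hs
  have hinv : Ring.inverse (Qs s T) = B := Ring.inverse_unit ⟨Qs s T, B, h1, h2⟩
  have hcomm : T * Qs s T = Qs s T * T := by
    unfold Qs
    simp only [mul_sub, sub_mul, mul_add, add_mul, mul_smul_comm, smul_mul_assoc,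
      mul_assoc, mul_one, one_mul]
  have hBT : B * T = T * B := by
    have h3 : B * T * Qs s T * B = B * Qs s T * T * B := by
      rw [mul_assoc B T, hcomm, ← mul_assoc]
    calc B * T = B * T * (Qs s T * B) := by rw [h1, mul_one]
      _ = B * T * Qs s T * B := by rw [mul_assoc (B * T)]
      _ = B * Qs s T * T * B := h3
      _ = T * B := by rw [h2, one_mul]
  have inner : (lmulL (star s) - T) * lmulL s - T * (lmulL (star s) - T) = Qs s T := by
    have hsum : (lmulL s + lmulL (star s) : X →L[ℝ] X) = (2 * s.re) • 1 := by
      rw [← lmulL_add, show s + star s = ((2 * s.re : ℝ) : ℍ) by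
        simp [Quaternion.self_add_star']
      , lmulL_real]
    have hss : (lmulL (star s) * lmulL s : X →L[ℝ] X) = (‖s‖ ^ 2 : ℝ) • 1 := by
      rw [lmulL_mul, Quaternion.star_mul_self,
        show ((Quaternion.normSq s : ℝ) : ℍ) = ((‖s‖ ^ 2 : ℝ) : ℍ) by
          rw [Quaternion.normSq_eq_norm_mul_self]; ring_nf, lmulL_real]
    have : (lmulL (star s) - T) * lmulL s - T * (lmulL (star s) - T)
        = lmulL (star s) * lmulL s - T * (lmulL s + lmulL (star s)) + T * T := by
      simp only [sub_mul, mul_sub, mul_add]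
      abel
    rw [this, hss, hsum, mul_smul_comm, mul_one, Qs]
    abel
  have key : sResL s T * lmulL s - T * sResL s T = 1 := by
    unfold sResL
    rw [hinv]
    have hTB : T * (B * (lmulL (star s) - T)) = B * (T * (lmulL (star s) - T)) := by
      rw [← mul_assoc, ← hBT, mul_assoc]
    rw [hTB, mul_assoc, ← mul_sub, inner, h2]
  have hT2 : T * sResL s T = sResL s T * lmulL s - 1 := by
    rw [← key]; abel
  rw [← mul_assoc, hT2, sub_mul, one_mul, mul_assoc, lmulL_mul, ← sq]
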